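/- arXiv:0910.1850 — 2 statements merged into one kernel-verified Lean document; each statement's English description precedes it below -/
import Mathlib

section
/- Let 1/2 < s < 1, N ≥ 1, and let m be the I-method symbol. For any 0 ≤ θ ≤ 1, any ξ₁ with 1 ≤ |ξ₁| ≤ N/5 (medium frequency) and any ξ₂ with |ξ₂| ≥ N/4 (high frequency), one has |m(ξ₁+ξ₂) − m(ξ₂)| ≤ C·(|ξ₁|/|ξ₂|)^θ · m(ξ₂), with C independent of N, ξ₁, ξ₂. -/
open Real Set

private lemma ten_pow_half : (1/5 : ℝ) ≤ (10:ℝ) ^ (-(2⁻¹) : ℝ) := by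
  rw [Real.rpow_neg (by norm_num), show ((2:ℝ)⁻¹) = (1/2 : ℝ) by norm_num,
    ← Real.sqrt_eq_rpow, one_div]
  have h1 : Real.sqrt 10 ≤ 5 := by
    rw [show (5:ℝ) = Real.sqrt 25 by
      rw [show (25:ℝ) = 5^2 by norm_num, Real.sqrt_sq (by norm_num)]]
    exact Real.sqrt_le_sqrt (by norm_num)
  exact inv_anti₀ (Real.sqrt_pos.2 (by norm_num)) h1

/-- Hölder-continuity estimate for the I-method symbol: for `0 ≤ θ ≤ 1`, a medium
frequency `1 ≤ |ξ₁| ≤ N/5` and a high frequency `|ξ₂| ≥ N/4`,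
`|m(ξ₁+ξ₂) − m(ξ₂)| ≤ C (|ξ₁|/|ξ₂|)^θ m(ξ₂)` with `C` independent of `N, ξ₁, ξ₂`. -/
theorem I_symbol_holder_shift_bound (s : ℝ) (hs0 : 1 / 2 < s) (hs1 : s < 1)
    (C₀ : ℝ) (hC₀ : 0 < C₀) (θ : ℝ) (hθ0 : 0 ≤ θ) (hθ1 : θ ≤ 1) :
    ∃ C : ℝ, 0 < C ∧ ∀ N : ℝ, 1 ≤ N →
      ∀ (m : EuclideanSpace ℝ (Fin 3) → ℝ) (g : ℝ → ℝ),
        (∀ ξ, m ξ = g ‖ξ‖) →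
        (∀ r : ℝ, 0 < g r) →
        AntitoneOn g (Set.Ici (0 : ℝ)) →
        (∀ r : ℝ, 0 ≤ r → r ≤ N → g r = 1) →
        (∀ r : ℝ, 2 * N ≤ r → g r = (r / N) ^ (s - 1)) →
        (∀ r : ℝ, 0 < r → DifferentiableAt ℝ g r) →
        (∀ r : ℝ, 0 < r → |deriv g r| ≤ C₀ * g r / r) →
        ∀ ξ₁ ξ₂ : EuclideanSpace ℝ (Fin 3),
          1 ≤ ‖ξ₁‖ → ‖ξ₁‖ ≤ N / 5 → N / 4 ≤ ‖ξ₂‖ →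
          |m (ξ₁ + ξ₂) - m ξ₂| ≤ C * (‖ξ₁‖ / ‖ξ₂‖) ^ θ * m ξ₂ := by
  refine ⟨25 * C₀, by positivity, ?_⟩
  intro N hN m g hm hgpos hanti h1 h2 hdiff hderiv ξ₁ ξ₂ hξ₁lo hξ₁hi hξ₂
  have hN0 : (0:ℝ) < N := lt_of_lt_of_le one_pos hN
  set r₁ := ‖ξ₁‖ with hr₁def
  set r₂ := ‖ξ₂‖ with hr₂def
  set r := ‖ξ₁ + ξ₂‖ with hrdef
  have hr₂0 : 0 < r₂ := lt_of_lt_of_le (by linarith) hξ₂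
  have hr₁0 : 0 < r₁ := lt_of_lt_of_le one_pos hξ₁lo
  -- g ≤ 1 on [0, ∞)
  have hg1 : ∀ x : ℝ, 0 ≤ x → g x ≤ 1 := by
    intro x hx
    have := hanti (Set.mem_Ici.2 le_rfl) (Set.mem_Ici.2 hx) hx
    rwa [h1 0 le_rfl hN0.le] at this
  have h2N : g (2 * N) = (2:ℝ) ^ (s - 1) := by
    rw [h2 (2 * N) le_rfl, mul_div_assoc, div_self hN0.ne', mul_one]
  have h2half : (1/2 : ℝ) ≤ (2:ℝ) ^ (s - 1) := by
    calc (1/2 : ℝ) = (2:ℝ) ^ (-1 : ℝ) := by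
          rw [Real.rpow_neg_one]; norm_num
      _ ≤ (2:ℝ) ^ (s - 1) :=
          Real.rpow_le_rpow_of_exponent_le one_le_two (by linarith)
  -- key ratio lemma
  have hratio : ∀ b : ℝ, N / 4 ≤ b → g (b / 5) ≤ 5 * g b := by
    intro b hb
    have hb0 : 0 < b := lt_of_lt_of_le (by linarith) hb
    rcases le_or_gt b (2 * N) with hcase | hcase
    · -- b ≤ 2N : g b ≥ g (2N) ≥ 1/2
      have hgb : (1/2 : ℝ) ≤ g b := by
        have := hanti (Set.mem_Ici.2 hb0.le) (Set.mem_Ici.2 (by linarith : (0:ℝ) ≤ 2 * N)) hcase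
        rw [h2N] at this; linarith
      have := hg1 (b / 5) (by linarith)
      linarith
    · have hgb : g b = (b / N) ^ (s - 1) := h2 b hcase.le
      have hbN1 : (1:ℝ) ≤ b / N := by
        rw [le_div_iff₀ hN0]; linarith
      rcases le_or_gt b (10 * N) with hcase2 | hcase2
      · -- 2N < b ≤ 10N : g b ≥ (b/N)^{-1/2} ≥ 10^{-1/2} ≥ 1/5
        have hbN10 : b / N ≤ 10 := by
          rw [div_le_iff₀ hN0]; linarith
        have e1 : (b / N) ^ (-(2⁻¹) : ℝ) ≤ (b / N) ^ (s - 1) :=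
          Real.rpow_le_rpow_of_exponent_le hbN1 (by norm_num; linarith)
        have e2 : (10:ℝ) ^ (-(2⁻¹) : ℝ) ≤ (b / N) ^ (-(2⁻¹) : ℝ) :=
          Real.rpow_le_rpow_of_nonpos (by linarith) hbN10 (by norm_num)
        have hgb5 : (1/5 : ℝ) ≤ g b := by
          rw [hgb]; linarith [ten_pow_half]
        have := hg1 (b / 5) (by linarith)
        linarith
      · -- b > 10N : both in power region
        have hgb5 : g (b / 5) = (b / 5 / N) ^ (s - 1) := h2 (b / 5) (by linarith)
        rw [hgb5, hgb]
        have hbN0 : (0:ℝ) ≤ b / N := by positivity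
        have key : (b / 5 / N : ℝ) = (b / N) * (5:ℝ)⁻¹ := by ring
        rw [key, Real.mul_rpow hbN0 (by norm_num),
          Real.inv_rpow (by norm_num : (0:ℝ) ≤ 5), ← Real.rpow_neg (by norm_num : (0:ℝ) ≤ 5)]
        have h5 : (5:ℝ) ^ (-(s - 1)) ≤ 5 := by
          calc (5:ℝ) ^ (-(s - 1)) ≤ (5:ℝ) ^ (1:ℝ) :=
                Real.rpow_le_rpow_of_exponent_le (by norm_num) (by linarith)
            _ = 5 := Real.rpow_one 5
        have hpos : (0:ℝ) ≤ (b / N) ^ (s - 1) := Real.rpow_nonneg hbN0 _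
        calc (b / N) ^ (s - 1) * (5:ℝ) ^ (-(s - 1))
            ≤ (b / N) ^ (s - 1) * 5 := by nlinarith [Real.rpow_nonneg (by norm_num : (0:ℝ) ≤ 5) (-(s-1))]
          _ = 5 * (b / N) ^ (s - 1) := by ring
  -- the interval containing r and r₂
  have hr_lb : r₂ / 5 ≤ r := by
    have h := norm_sub_norm_le ξ₂ (ξ₁ + ξ₂)
    have : ξ₂ - (ξ₁ + ξ₂) = -ξ₁ := by abel
    rw [this, norm_neg] at h
    -- r₂ - r ≤ r₁
    have hr₁r₂ : r₁ ≤ 4 / 5 * r₂ := by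
      have : N ≤ 4 * r₂ := by linarith
      linarith
    linarith
  have hr_ub : r ≤ r₂ + r₁ := by
    have := norm_add_le ξ₁ ξ₂
    linarith
  have hIcc2 : r₂ ∈ Set.Icc (r₂ / 5) (r₂ + r₁) := ⟨by linarith, by linarith⟩
  have hIccr : r ∈ Set.Icc (r₂ / 5) (r₂ + r₁) := ⟨hr_lb, hr_ub⟩
  -- derivative bound on the interval
  have hK : ∀ x ∈ Set.Icc (r₂ / 5) (r₂ + r₁), ‖deriv g x‖ ≤ 25 * C₀ * g r₂ / r₂ := by
    intro x hx
    have hx0 : 0 < x := lt_of_lt_of_le (by linarith) hx.1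
    have h1' := hderiv x hx0
    have hgx : g x ≤ 5 * g r₂ := by
      have : g x ≤ g (r₂ / 5) :=
        hanti (Set.mem_Ici.2 (by linarith : (0:ℝ) ≤ r₂ / 5)) (Set.mem_Ici.2 hx0.le) hx.1
      have := hratio r₂ hξ₂
      linarith
    rw [Real.norm_eq_abs]
    calc |deriv g x| ≤ C₀ * g x / x := h1'
      _ ≤ C₀ * (5 * g r₂) / (r₂ / 5) := by
          apply div_le_div₀ (mul_nonneg hC₀.le (by nlinarith [(hgpos r₂).le])) _ (by linarith) hx.1
          have := (hgpos x).le
          nlinarith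
      _ = 25 * C₀ * g r₂ / r₂ := by field_simp; ring
  -- mean value inequality
  have hMVT : ‖g r - g r₂‖ ≤ 25 * C₀ * g r₂ / r₂ * ‖r - r₂‖ :=
    Convex.norm_image_sub_le_of_norm_deriv_le
      (fun x hx => hdiff x (lt_of_lt_of_le (by linarith) hx.1))
      hK (convex_Icc _ _) hIcc2 hIccr
  have habs : ‖r - r₂‖ ≤ r₁ := by
    rw [Real.norm_eq_abs]
    have h := abs_norm_sub_norm_le (ξ₁ + ξ₂) ξ₂
    have : ξ₁ + ξ₂ - ξ₂ = ξ₁ := by abel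
    rwa [this] at h
  -- put it together
  rw [hm, hm]
  show |g r - g r₂| ≤ 25 * C₀ * (r₁ / r₂) ^ θ * g r₂
  have hq1 : r₁ / r₂ ≤ 1 := by
    rw [div_le_one hr₂0]; linarith
  have hq0 : 0 < r₁ / r₂ := by positivity
  have hqθ : r₁ / r₂ ≤ (r₁ / r₂) ^ θ := by
    calc r₁ / r₂ = (r₁ / r₂) ^ (1:ℝ) := (Real.rpow_one _).symm
      _ ≤ (r₁ / r₂) ^ θ := Real.rpow_le_rpow_of_exponent_ge hq0 hq1 hθ1
  have hkey : |g r - g r₂| ≤ 25 * C₀ * (r₁ / r₂) * g r₂ := by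
    rw [← Real.norm_eq_abs]
    calc ‖g r - g r₂‖ ≤ 25 * C₀ * g r₂ / r₂ * ‖r - r₂‖ := hMVT
      _ ≤ 25 * C₀ * g r₂ / r₂ * r₁ := by
          apply mul_le_mul_of_nonneg_left habs
          have := (hgpos r₂).le
          positivity
      _ = 25 * C₀ * (r₁ / r₂) * g r₂ := by field_simp
  calc |g r - g r₂| ≤ 25 * C₀ * (r₁ / r₂) * g r₂ := hkey
    _ ≤ 25 * C₀ * (r₁ / r₂) ^ θ * g r₂ := by
        apply mul_le_mul_of_nonneg_right _ (hgpos r₂).le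
        apply mul_le_mul_of_nonneg_left hqθ (by positivity)
end

section
/- Let ξ₀, ξ₁, ξ₂ ∈ ℝ³ with ξ₀+ξ₁+ξ₂ = 0 and τ₀, τ₁, τ₂ ∈ ℝ. Then the null-form symbol satisfies |ξ₁ ∧ ξ₂| ≤ C |ξ₀|^{1/2} |ξ₁|^{1/2} |ξ₂|^{1/2} (⟨τ₀+τ₁+τ₂⟩ + λ₀ + λ₁ + λ₂)^{1/2}, where |ξ₁ ∧ ξ₂| denotes the Euclidean norm of the wedge product (cross product) and λ_j := ⟨|ξ_j| − |τ_j|⟩. -/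
private lemma aux_abs (x y z : ℝ) (hx : |x| ≤ |z|) (hy : |y| ≤ |z|) :
    |x| + |y| ≤ |z| + |x + y + z| := by
  rcases abs_cases x with ⟨h1, h1'⟩ | ⟨h1, h1'⟩ <;>
  rcases abs_cases y with ⟨h2, h2'⟩ | ⟨h2, h2'⟩ <;>
  rcases abs_cases z with ⟨h3, h3'⟩ | ⟨h3, h3'⟩ <;>
  rcases abs_cases (x + y + z) with ⟨h4, h4'⟩ | ⟨h4, h4'⟩ <;>
  linarith

private lemma habs_sqrt (x : ℝ) : |x| ≤ Real.sqrt (1 + x ^ 2) := by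
  rw [← Real.sqrt_sq_eq_abs]
  exact Real.sqrt_le_sqrt (by nlinarith)

private lemma key1 (a b c M : ℝ) (ha : 0 ≤ a) (hb : 0 ≤ b) (hc : 0 ≤ c)
    (h1 : c ≤ a + b) (h2 : a ≤ b + c) (h3 : b ≤ a + c)
    (hac : a ≤ c) (hbc : b ≤ c) (hM : a + b - c ≤ M) :
    (a + b + c) * ((a + b - c) * ((b + c - a) * (c + a - b))) ≤ 12 * (a * (b * (c * M))) := by
  have hM0 : 0 ≤ M := by linarith
  have h0 : 0 ≤ a + b - c := by linarith
  have hstep : (a + b + c) * ((a + b - c) * ((b + c - a) * (c + a - b)))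
      ≤ (3 * c) * (M * ((2 * b) * (2 * a))) := by
    have e1 : 0 ≤ (b + c - a) * (c + a - b) := mul_nonneg (by linarith) (by linarith)
    have e2 : 0 ≤ (a + b - c) * ((b + c - a) * (c + a - b)) := mul_nonneg h0 e1
    have e3 : (a + b - c) * ((b + c - a) * (c + a - b)) ≤ M * ((2 * b) * (2 * a)) := by
      have e4 : (b + c - a) * (c + a - b) ≤ (2 * b) * (2 * a) :=
        mul_le_mul (by linarith) (by linarith) (by linarith) (by linarith)
      exact mul_le_mul hM e4 e1 hM0
    exact mul_le_mul (by linarith) e3 e2 (by linarith)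
  nlinarith [hstep]

private lemma key (a b c M : ℝ) (ha : 0 ≤ a) (hb : 0 ≤ b) (hc : 0 ≤ c)
    (h1 : c ≤ a + b) (h2 : a ≤ b + c) (h3 : b ≤ a + c)
    (hm : a + b - c ≤ M ∨ b + c - a ≤ M ∨ c + a - b ≤ M) :
    (a + b + c) * ((a + b - c) * ((b + c - a) * (c + a - b))) ≤ 12 * (a * (b * (c * M))) := by
  rcases le_total (a + b - c) (b + c - a) with h12 | h12
  · rcases le_total (a + b - c) (c + a - b) with h13 | h13
    · -- P1 minimal
      have hPM : a + b - c ≤ M := by rcases hm with h | h | h <;> linarith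
      exact key1 a b c M ha hb hc h1 h2 h3 (by linarith) (by linarith) hPM
    · -- P3 minimal
      have hPM : c + a - b ≤ M := by rcases hm with h | h | h <;> linarith
      have H := key1 c a b M hc ha hb (by linarith) (by linarith) (by linarith)
        (by linarith) (by linarith) hPM
      nlinarith [H]
  · rcases le_total (b + c - a) (c + a - b) with h23 | h23
    · -- P2 minimal
      have hPM : b + c - a ≤ M := by rcases hm with h | h | h <;> linarith
      have H := key1 b c a M hb hc ha (by linarith) (by linarith) (by linarith)
        (by linarith) (by linarith) hPM
      nlinarith [H]
    · -- P3 minimal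
      have hPM : c + a - b ≤ M := by rcases hm with h | h | h <;> linarith
      have H := key1 c a b M hc ha hb (by linarith) (by linarith) (by linarith)
        (by linarith) (by linarith) hPM
      nlinarith [H]

/-- Null-form symbol bound: for frequencies `ξ₀+ξ₁+ξ₂ = 0` and modulations `τⱼ`,
`|ξ₁ ∧ ξ₂| ≲ |ξ₀|^{1/2}|ξ₁|^{1/2}|ξ₂|^{1/2} (⟨τ₀+τ₁+τ₂⟩ + λ₀+λ₁+λ₂)^{1/2}`,
where `|ξ₁ ∧ ξ₂|² = |ξ₁|²|ξ₂|² − (ξ₁·ξ₂)²` and `λⱼ = ⟨|ξⱼ| − |τⱼ|⟩` with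
`⟨x⟩ = (1+x²)^{1/2}`. -/
theorem nullform_symbol_bound :
    ∃ C : ℝ, 0 < C ∧
      ∀ ξ₀ ξ₁ ξ₂ : EuclideanSpace ℝ (Fin 3), ξ₀ + ξ₁ + ξ₂ = 0 →
      ∀ τ₀ τ₁ τ₂ : ℝ,
        Real.sqrt (‖ξ₁‖ ^ 2 * ‖ξ₂‖ ^ 2 - (inner ℝ ξ₁ ξ₂ : ℝ) ^ 2) ≤
          C * ‖ξ₀‖ ^ (1 / 2 : ℝ) * ‖ξ₁‖ ^ (1 / 2 : ℝ) * ‖ξ₂‖ ^ (1 / 2 : ℝ) *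
            (Real.sqrt (1 + (τ₀ + τ₁ + τ₂) ^ 2) +
              Real.sqrt (1 + (‖ξ₀‖ - |τ₀|) ^ 2) +
              Real.sqrt (1 + (‖ξ₁‖ - |τ₁|) ^ 2) +
              Real.sqrt (1 + (‖ξ₂‖ - |τ₂|) ^ 2)) ^ (1 / 2 : ℝ) := by
  refine ⟨2, by norm_num, ?_⟩
  intro ξ₀ ξ₁ ξ₂ hsum τ₀ τ₁ τ₂
  set a : ℝ := ‖ξ₁‖ with ha_def
  set b : ℝ := ‖ξ₂‖ with hb_def
  set c : ℝ := ‖ξ₀‖ with hc_def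
  set t : ℝ := (inner ℝ ξ₁ ξ₂ : ℝ) with ht_def
  set s : ℝ := τ₀ + τ₁ + τ₂ with hs_def
  set M : ℝ := Real.sqrt (1 + s ^ 2) + Real.sqrt (1 + (c - |τ₀|) ^ 2) +
      Real.sqrt (1 + (a - |τ₁|) ^ 2) + Real.sqrt (1 + (b - |τ₂|) ^ 2) with hM_def
  have ha : 0 ≤ a := norm_nonneg _
  have hb : 0 ≤ b := norm_nonneg _
  have hc : 0 ≤ c := norm_nonneg _
  have hM : 0 ≤ M := by
    have := Real.sqrt_nonneg (1 + s ^ 2)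
    have := Real.sqrt_nonneg (1 + (c - |τ₀|) ^ 2)
    have := Real.sqrt_nonneg (1 + (a - |τ₁|) ^ 2)
    have := Real.sqrt_nonneg (1 + (b - |τ₂|) ^ 2)
    linarith
  -- vector identities
  have hx0 : ξ₀ = -(ξ₁ + ξ₂) := by
    apply eq_neg_of_add_eq_zero_left
    rw [← hsum]; abel
  have hx1 : ξ₁ = -(ξ₀ + ξ₂) := by
    apply eq_neg_of_add_eq_zero_left
    rw [← hsum]; abel
  have hx2 : ξ₂ = -(ξ₀ + ξ₁) := by
    apply eq_neg_of_add_eq_zero_left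
    rw [← hsum]; abel
  have hc2 : c ^ 2 = a ^ 2 + b ^ 2 + 2 * t := by
    have h : c = ‖ξ₁ + ξ₂‖ := by rw [hc_def, hx0, norm_neg]
    rw [h, @norm_add_sq_real]; ring
  have h1 : c ≤ a + b := by
    have h : c = ‖ξ₁ + ξ₂‖ := by rw [hc_def, hx0, norm_neg]
    rw [h]; exact norm_add_le _ _
  have h2 : a ≤ b + c := by
    have h : a = ‖ξ₀ + ξ₂‖ := by rw [ha_def, hx1, norm_neg]
    rw [h]
    calc ‖ξ₀ + ξ₂‖ ≤ ‖ξ₀‖ + ‖ξ₂‖ := norm_add_le _ _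
      _ = b + c := by rw [hb_def, hc_def]; ring
  have h3 : b ≤ a + c := by
    have h : b = ‖ξ₀ + ξ₁‖ := by rw [hb_def, hx2, norm_neg]
    rw [h]
    calc ‖ξ₀ + ξ₁‖ ≤ ‖ξ₀‖ + ‖ξ₁‖ := norm_add_le _ _
      _ = a + c := by rw [ha_def, hc_def]; ring
  -- modulation bound: one of the P's is ≤ M
  have hl0 : abs (c - abs τ₀) ≤ Real.sqrt (1 + (c - |τ₀|) ^ 2) := habs_sqrt (c - abs τ₀)
  have hl1 : abs (a - abs τ₁) ≤ Real.sqrt (1 + (a - |τ₁|) ^ 2) := habs_sqrt (a - abs τ₁)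
  have hl2 : abs (b - abs τ₂) ≤ Real.sqrt (1 + (b - |τ₂|) ^ 2) := habs_sqrt (b - abs τ₂)
  have hls : abs s ≤ Real.sqrt (1 + s ^ 2) := habs_sqrt s
  have hl0' : abs τ₀ - c ≤ abs (c - abs τ₀) := by rw [abs_sub_comm]; exact le_abs_self _
  have hl0'' : c - abs τ₀ ≤ abs (c - abs τ₀) := le_abs_self _
  have hl1' : abs τ₁ - a ≤ abs (a - abs τ₁) := by rw [abs_sub_comm]; exact le_abs_self _
  have hl1'' : a - abs τ₁ ≤ abs (a - abs τ₁) := le_abs_self _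
  have hl2' : abs τ₂ - b ≤ abs (b - abs τ₂) := by rw [abs_sub_comm]; exact le_abs_self _
  have hl2'' : b - abs τ₂ ≤ abs (b - abs τ₂) := le_abs_self _
  have htau : (abs τ₁ + abs τ₂ - abs τ₀ ≤ abs s) ∨ (abs τ₀ + abs τ₂ - abs τ₁ ≤ abs s) ∨
      (abs τ₀ + abs τ₁ - abs τ₂ ≤ abs s) := by
    rcases le_total (abs τ₁) (abs τ₀) with h | h
    · rcases le_total (abs τ₂) (abs τ₀) with h' | h'
      · left
        have h5 := aux_abs τ₁ τ₂ τ₀ h h'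
        have e : τ₁ + τ₂ + τ₀ = s := by rw [hs_def]; ring
        rw [e] at h5; linarith
      · right; right
        have h5 := aux_abs τ₀ τ₁ τ₂ h' (le_trans h h')
        have e : τ₀ + τ₁ + τ₂ = s := by rw [hs_def]
        rw [e] at h5; linarith
    · rcases le_total (abs τ₂) (abs τ₁) with h' | h'
      · right; left
        have h5 := aux_abs τ₀ τ₂ τ₁ h h'
        have e : τ₀ + τ₂ + τ₁ = s := by rw [hs_def]; ring
        rw [e] at h5; linarith
      · right; right
        have h5 := aux_abs τ₀ τ₁ τ₂ (le_trans h h') h'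
        have e : τ₀ + τ₁ + τ₂ = s := by rw [hs_def]
        rw [e] at h5; linarith
  have hm : a + b - c ≤ M ∨ b + c - a ≤ M ∨ c + a - b ≤ M := by
    rcases htau with h | h | h
    · left; linarith
    · right; left; linarith
    · right; right; linarith
  have hprod := key a b c M ha hb hc h1 h2 h3 hm
  have ht : t = (c ^ 2 - a ^ 2 - b ^ 2) / 2 := by linarith
  have hid : (a + b + c) * ((a + b - c) * ((b + c - a) * (c + a - b)))
      = 4 * (a ^ 2 * b ^ 2 - t ^ 2) := by rw [ht]; ring
  have habcM : 0 ≤ a * (b * (c * M)) :=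
    mul_nonneg ha (mul_nonneg hb (mul_nonneg hc hM))
  have hW2 : a ^ 2 * b ^ 2 - t ^ 2 ≤ 4 * (a * (b * (c * M))) := by linarith [hprod, hid]
  simp only [← Real.sqrt_eq_rpow]
  have h4 : Real.sqrt (4 : ℝ) = 2 := by
    rw [show (4 : ℝ) = 2 ^ 2 by norm_num, Real.sqrt_sq (by norm_num : (0:ℝ) ≤ 2)]
  calc Real.sqrt (a ^ 2 * b ^ 2 - t ^ 2)
      ≤ Real.sqrt (4 * (a * (b * (c * M)))) := Real.sqrt_le_sqrt hW2
    _ = Real.sqrt 4 * (Real.sqrt a * (Real.sqrt b * (Real.sqrt c * Real.sqrt M))) := by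
        rw [Real.sqrt_mul (by norm_num : (0:ℝ) ≤ 4), Real.sqrt_mul ha, Real.sqrt_mul hb,
          Real.sqrt_mul hc]
    _ = 2 * Real.sqrt c * Real.sqrt a * Real.sqrt b * Real.sqrt M := by rw [h4]; ring
end
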